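/- Let n ≥ 1 and let q be a prime divisor of g(n). Then there is at most one prime p with p ≤ q/2 that does not divide g(n). -/

import Mathlib

/-- Landau's function: the maximal order of a permutation of the symmetric group on `n` letters. -/
noncomputable def landau (n : ℕ) : ℕ :=
  Finset.univ.sup fun σ : Equiv.Perm (Fin n) => orderOf σ

/-- The largest prime factor of `m` (0 if `m` has no prime factor). -/
def maxPrimeFac (m : ℕ) : ℕ := m.primeFactors.sup id

private lemma arith_key (p₁ p₂ q u : ℤ) (h2 : 2 ≤ p₁) (h12 : p₁ < p₂) (hq2 : 2*p₂ ≤ q)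
    (hupq : u*p₂ ≤ q) (hqlt : p₁*p₂ < q) (hA : q + 1 ≤ u*p₁ + p₂) : False := by
  nlinarith [mul_le_mul_of_nonneg_right hA (by linarith : (0:ℤ) ≤ p₂),
    mul_le_mul_of_nonneg_right hupq (by linarith : (0:ℤ) ≤ p₁),
    mul_le_mul_of_nonneg_right (by linarith : p₁*p₂ + 1 ≤ q) (by linarith : (0:ℤ) ≤ p₂ - p₁),
    mul_nonneg (by linarith : (0:ℤ) ≤ p₁ - 2) (by linarith : (0:ℤ) ≤ p₂ - p₁ - 1)]

private lemma prime_dvd_multiset_lcm {q : ℕ} (hq : q.Prime) (s : Multiset ℕ)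
    (h : q ∣ s.lcm) : ∃ c ∈ s, q ∣ c := by
  induction s using Multiset.induction_on with
  | empty =>
    rw [Multiset.lcm_zero] at h
    exact absurd (Nat.eq_one_of_dvd_one h) hq.ne_one
  | cons a s ih =>
    rw [Multiset.lcm_cons] at h
    have h2 : q ∣ a * s.lcm :=
      h.trans (lcm_dvd (dvd_mul_right a s.lcm) (dvd_mul_left s.lcm a))
    rcases (Nat.Prime.dvd_mul hq).mp h2 with h3 | h3
    · exact ⟨a, Multiset.mem_cons_self a s, h3⟩
    · obtain ⟨c, hc, hqc⟩ := ih h3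
      exact ⟨c, Multiset.mem_cons_of_mem hc, hqc⟩

private lemma le_landau (n : ℕ) (t : Multiset ℕ) (h2 : ∀ e ∈ t, 2 ≤ e) (hsum : t.sum ≤ n) :
    0 < t.lcm ∧ t.lcm ≤ landau n := by
  obtain ⟨τ, hτ⟩ := (Equiv.Perm.exists_with_cycleType_iff (Fin n)).mpr
    ⟨by simpa using hsum, h2⟩
  have hord : t.lcm = orderOf τ := by rw [← hτ, Equiv.Perm.lcm_cycleType]
  refine ⟨hord ▸ orderOf_pos τ, hord ▸ Finset.le_sup (Finset.mem_univ τ)⟩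

set_option maxHeartbeats 1000000 in
private lemma key (n q p₁ p₂ : ℕ) (hq : q.Prime) (hp₁ : p₁.Prime) (hp₂ : p₂.Prime)
    (h12 : p₁ < p₂) (hq2 : 2*p₂ ≤ q) (hqd : q ∣ landau n)
    (hnd1 : ¬ p₁ ∣ landau n) (hnd2 : ¬ p₂ ∣ landau n) : False := by
  obtain ⟨σ, -, hσ⟩ := Finset.exists_mem_eq_sup (Finset.univ : Finset (Equiv.Perm (Fin n)))
    ⟨1, Finset.mem_univ 1⟩ (fun σ => orderOf σ)
  set L := landau n with hLdef
  have hLσ : orderOf σ = L := hσ.symm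
  have hLpos : 0 < L := hLσ ▸ orderOf_pos σ
  have hlcm : σ.cycleType.lcm = L := by rw [Equiv.Perm.lcm_cycleType, hLσ]
  have hsum : σ.cycleType.sum ≤ n := by
    rw [Equiv.Perm.sum_cycleType]
    simpa using Finset.card_le_univ σ.support
  obtain ⟨c, hc, hqc⟩ := prime_dvd_multiset_lcm hq _ (hlcm ▸ hqd)
  obtain ⟨d, hd⟩ := hqc
  have hc2 : 2 ≤ c := Equiv.Perm.two_le_of_mem_cycleType hc
  have hd1 : 1 ≤ d := by
    rcases Nat.eq_zero_or_pos d with h | h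
    · subst h; simp at hd; omega
    · exact h
  -- choose the power of p₁
  have hex : ∃ k, q < p₁^(k+1) * p₂ := by
    refine ⟨q, ?_⟩
    calc q < 2^q := Nat.lt_two_pow_self
    _ ≤ 2^(q+1) := Nat.pow_le_pow_right (by norm_num) (by omega)
    _ ≤ p₁^(q+1) := Nat.pow_le_pow_left hp₁.two_le _
    _ ≤ p₁^(q+1) * p₂ := Nat.le_mul_of_pos_right _ hp₂.pos
  set a := Nat.find hex with ha
  set x := p₁^(a+1) with hx
  have hqx : q < x * p₂ := Nat.find_spec hex
  have hx2 : 2 ≤ x := hp₁.two_le.trans (Nat.le_self_pow (Nat.succ_ne_zero a) p₁)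
  have hq5 : p₁ + p₂ ≤ q := by omega
  have hxpq : x + p₂ ≤ q := by
    rcases Nat.eq_zero_or_pos a with haz | hapos
    · have : x = p₁ := by rw [hx, haz, pow_one]
      omega
    · have hmin : ¬ q < p₁^((a-1)+1) * p₂ := Nat.find_min hex (by omega)
      have hupq : p₁^a * p₂ ≤ q := by
        have : (a-1)+1 = a := by omega
        rw [this] at hmin; omega
      have hple : p₁ ≤ p₁^a := by
        calc p₁ = p₁^1 := (pow_one p₁).symm
        _ ≤ p₁^a := Nat.pow_le_pow_right hp₁.pos hapos
      have hq1 : p₁ * p₂ ≤ q := le_trans (Nat.mul_le_mul_right p₂ hple) hupq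
      have hqne : q ≠ p₁ * p₂ := by
        intro h
        rcases (Nat.Prime.eq_one_or_self_of_dvd hq p₁ ⟨p₂, h⟩) with h1 | h1
        · exact hp₁.ne_one h1
        · omega
      by_contra hcon
      push_neg at hcon
      have hA : q + 1 ≤ p₁^a * p₁ + p₂ := by
        have : x = p₁^a * p₁ := by rw [hx, pow_succ]
        omega
      exact arith_key (p₁ : ℤ) p₂ q (p₁^a)
        (by exact_mod_cast hp₁.two_le) (by exact_mod_cast h12) (by exact_mod_cast hq2)
        (by exact_mod_cast hupq) (by exact_mod_cast lt_of_le_of_ne hq1 (Ne.symm hqne))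
        (by exact_mod_cast hA)
  -- coprimality
  have hcopx : Nat.Coprime x L := ((hp₁.coprime_iff_not_dvd).mpr hnd1).pow_left _
  have hcop2 : Nat.Coprime p₂ L := (hp₂.coprime_iff_not_dvd).mpr hnd2
  have hcop12 : Nat.Coprime x p₂ :=
    (((Nat.coprime_primes hp₁ hp₂).mpr (Nat.ne_of_lt h12))).pow_left _
  set rest := σ.cycleType.erase c with hrest
  have hcons : c ::ₘ rest = σ.cycleType := Multiset.cons_erase hc
  have hrest2 : ∀ e ∈ rest, 2 ≤ e := fun e he =>
    Equiv.Perm.two_le_of_mem_cycleType (Multiset.mem_of_mem_erase he)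
  have hsum' : c + rest.sum ≤ n := by
    rw [← Multiset.sum_cons, hcons]; exact hsum
  have hlcm' : lcm c rest.lcm = L := by rw [← Multiset.lcm_cons, hcons, hlcm]
  -- build the new multiset t
  obtain ⟨t, htmem, htsum, hddvd, hrdvd⟩ :
      ∃ t : Multiset ℕ, (∀ e ∈ t, 2 ≤ e) ∧ t.sum ≤ n ∧ d ∣ t.lcm ∧
        (x ∈ t ∧ p₂ ∈ t ∧ ∀ e ∈ rest, e ∣ t.lcm) := by
    rcases eq_or_lt_of_le hd1 with hdeq | hdgt
    · refine ⟨x ::ₘ p₂ ::ₘ rest, ?_, ?_, ?_, ?_, ?_, ?_⟩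
      · intro e he
        rcases Multiset.mem_cons.mp he with h | he
        · omega
        rcases Multiset.mem_cons.mp he with h | he
        · have := hp₂.two_le; omega
        · exact hrest2 e he
      · have hcq : c = q := by rw [hd, ← hdeq, mul_one]
        simp only [Multiset.sum_cons]; omega
      · rw [← hdeq]; exact one_dvd _
      · exact Multiset.mem_cons_self x _
      · exact Multiset.mem_cons_of_mem (Multiset.mem_cons_self p₂ _)
      · intro e he
        exact Multiset.dvd_lcm (Multiset.mem_cons_of_mem (Multiset.mem_cons_of_mem he))
    · refine ⟨x ::ₘ p₂ ::ₘ d ::ₘ rest, ?_, ?_, ?_, ?_, ?_, ?_⟩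
      · intro e he
        rcases Multiset.mem_cons.mp he with h | he
        · omega
        rcases Multiset.mem_cons.mp he with h | he
        · have := hp₂.two_le; omega
        rcases Multiset.mem_cons.mp he with h | he
        · omega
        · exact hrest2 e he
      · simp only [Multiset.sum_cons]
        have hq2' : 2 ≤ q := hq.two_le
        have : q + d ≤ q * d := by nlinarith
        have : c = q * d := hd
        omega
      · exact Multiset.dvd_lcm (Multiset.mem_cons_of_mem
          (Multiset.mem_cons_of_mem (Multiset.mem_cons_self d _)))
      · exact Multiset.mem_cons_self x _
      · exact Multiset.mem_cons_of_mem (Multiset.mem_cons_self p₂ _)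
      · intro e he
        exact Multiset.dvd_lcm (Multiset.mem_cons_of_mem
          (Multiset.mem_cons_of_mem (Multiset.mem_cons_of_mem he)))
  obtain ⟨hxt, hp2t, hrestdvd⟩ := hrdvd
  obtain ⟨htpos, htle⟩ := le_landau n t htmem htsum
  -- L ∣ q * t.lcm
  have hLdvd : L ∣ q * t.lcm := by
    rw [← hlcm']
    refine lcm_dvd ?_ ?_
    · rw [hd]; exact mul_dvd_mul_left q hddvd
    · exact dvd_trans (Multiset.lcm_dvd.mpr hrestdvd) (dvd_mul_left _ q)
  have hxdvd : x * p₂ ∣ t.lcm :=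
    Nat.Coprime.mul_dvd_of_dvd_of_dvd hcop12 (Multiset.dvd_lcm hxt) (Multiset.dvd_lcm hp2t)
  have hbig : L * (x * p₂) ∣ q * t.lcm :=
    Nat.Coprime.mul_dvd_of_dvd_of_dvd (Nat.Coprime.symm (Nat.Coprime.mul hcopx hcop2))
      hLdvd (hxdvd.trans (dvd_mul_left _ q))
  have hle : L * (x * p₂) ≤ q * t.lcm :=
    Nat.le_of_dvd (Nat.mul_pos hq.pos htpos) hbig
  have h5 : q * t.lcm ≤ q * L := Nat.mul_le_mul_left q htle
  have h6 : L * (q+1) ≤ L * (x * p₂) := Nat.mul_le_mul_left L (by omega : q + 1 ≤ x * p₂)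
  have h7 : L * (q+1) ≤ q * L := le_trans h6 (le_trans hle h5)
  rw [Nat.mul_add, Nat.mul_one, Nat.mul_comm L q] at h7
  omega

/-- If q is a prime divisor of g(n), there is at most one prime p ≤ q/2 not dividing g(n). -/
theorem stmt7 (n q : ℕ) (hn : 1 ≤ n) (hq : q.Prime) (hqd : q ∣ landau n) :
    ∀ p₁ p₂ : ℕ, p₁.Prime → p₂.Prime → (p₁ : ℝ) ≤ (q : ℝ) / 2 → (p₂ : ℝ) ≤ (q : ℝ) / 2 →
      ¬ p₁ ∣ landau n → ¬ p₂ ∣ landau n → p₁ = p₂ := by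
  intro p₁ p₂ hp₁ hp₂ hle1 hle2 hnd1 hnd2
  have h1 : 2 * p₁ ≤ q := by
    have : (2 * p₁ : ℝ) ≤ q := by linarith
    exact_mod_cast this
  have h2 : 2 * p₂ ≤ q := by
    have : (2 * p₂ : ℝ) ≤ q := by linarith
    exact_mod_cast this
  by_contra hne
  rcases Ne.lt_or_gt hne with h | h
  · exact key n q p₁ p₂ hq hp₁ hp₂ h h2 hqd hnd1 hnd2
  · exact key n q p₂ p₁ hq hp₂ hp₁ h h1 hqd hnd2 hnd1
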